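/- arXiv:2510.18402 — 6 statements merged into one kernel-verified Lean document; each statement's English description precedes it below -/
import Mathlib

section
/- Suppose the MPC setup assumptions hold (continuity of f, closedness of Z with compact input projection, the path/steady-state assumptions on p, g, g_p, the cost assumptions on ℓ and V_o, and the controllability assumption). If the finite-horizon optimal control problem is feasible at the initial state x_0, then under the MPC closed loop x_{k+1} = f(x_k, u*_{0|k}) the problem remains feasible for all k > 0, the closed-loop trajectory satisfies (x_k, u_k) ∈ Z and B(x_k) ∩ O_i = ∅ for all k ≥ 0 and all i ∈ {1,…,N_o}, and the state x_k converges to the target state x_T = g_p(1) as k → ∞. -/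
open Filter Topology

noncomputable section

/-- A class-`K` function: continuous on `[0,∞)`, strictly increasing there, vanishing at `0`. -/
def IsClassK (α : ℝ → ℝ) : Prop :=
  ContinuousOn α (Set.Ici 0) ∧ StrictMonoOn α (Set.Ici 0) ∧ α 0 = 0

/-- A class-`K∞` function: class `K` and unbounded. -/
def IsClassKInfty (α : ℝ → ℝ) : Prop :=
  IsClassK α ∧ Filter.Tendsto α Filter.atTop Filter.atTop

/-- The data of the output-tracking MPC problem for motion planning:
dynamics `f`, constraint set `Z`, `No` obstacles `O i`, footprint `B`,
reference path `p`, output map `g`, steady-state path `gp` with steady inputs `us`,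
stage cost `sc` (called `ℓ` in the paper), offset cost `Vo`, and horizon `N`. -/
structure MPC (n m q : ℕ) where
  f : EuclideanSpace ℝ (Fin n) → EuclideanSpace ℝ (Fin m) → EuclideanSpace ℝ (Fin n)
  Z : Set (EuclideanSpace ℝ (Fin n) × EuclideanSpace ℝ (Fin m))
  No : ℕ
  O : ℕ → Set (EuclideanSpace ℝ (Fin 2))
  B : EuclideanSpace ℝ (Fin n) → Set (EuclideanSpace ℝ (Fin 2))
  p : ℝ → EuclideanSpace ℝ (Fin q)
  g : EuclideanSpace ℝ (Fin n) → EuclideanSpace ℝ (Fin q)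
  gp : ℝ → EuclideanSpace ℝ (Fin n)
  us : ℝ → EuclideanSpace ℝ (Fin m)
  sc : EuclideanSpace ℝ (Fin n) → EuclideanSpace ℝ (Fin m) → ℝ
  Vo : ℝ → ℝ
  N : ℕ

namespace MPC

variable {n m q : ℕ} (M : MPC n m q)

/-- A tuple `(u_{0:N}, x_{0:N}, s)` is feasible at state `x` for problem (7):
`x_{0|k} = x`, the dynamics hold along the prediction, the terminal pair is a steady
state whose output lies on the path at `s ∈ [0,1]`, the state/input constraints hold, and
the predicted states `l = 1,…,N` are collision-free. -/
def Feasible (x : EuclideanSpace ℝ (Fin n)) (u : ℕ → EuclideanSpace ℝ (Fin m))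
    (xs : ℕ → EuclideanSpace ℝ (Fin n)) (s : ℝ) : Prop :=
  s ∈ Set.Icc (0 : ℝ) 1 ∧
  xs 0 = x ∧
  (∀ l < M.N, xs (l + 1) = M.f (xs l) (u l)) ∧
  xs M.N = M.f (xs M.N) (u M.N) ∧
  M.g (xs M.N) = M.p s ∧
  (∀ l ≤ M.N, (xs l, u l) ∈ M.Z) ∧
  (∀ l, 1 ≤ l → l ≤ M.N → ∀ i < M.No, M.B (xs l) ∩ M.O i = ∅)

/-- The MPC cost `J_N(u, x, s) = Σ_{l=0}^{N-1} ℓ(x_l − x_N, u_l − u_N) + V_o(1 − s)`. -/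
def Cost (u : ℕ → EuclideanSpace ℝ (Fin m)) (xs : ℕ → EuclideanSpace ℝ (Fin n)) (s : ℝ) : ℝ :=
  (∑ l ∈ Finset.range M.N, M.sc (xs l - xs M.N) (u l - u M.N)) + M.Vo (1 - s)

/-- `(u, xs, s)` is an optimal feasible tuple at `x`; its cost is the optimal value `V_N(x)`. -/
def IsOptimal (x : EuclideanSpace ℝ (Fin n)) (u : ℕ → EuclideanSpace ℝ (Fin m))
    (xs : ℕ → EuclideanSpace ℝ (Fin n)) (s : ℝ) : Prop :=
  M.Feasible x u xs s ∧
  ∀ u' xs' s', M.Feasible x u' xs' s' → M.Cost u xs s ≤ M.Cost u' xs' s'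

/-- Assumption 1 items 2–4 on the path and steady states: `g ∘ gp = p` on `[0,1]`, each
`(gp s, us s)` is a steady state in the interior of `Z` whose footprint avoids all
obstacles, and it is the unique steady state with output `p s`. -/
def SteadyStatePath : Prop :=
  (∀ s ∈ Set.Icc (0 : ℝ) 1, M.g (M.gp s) = M.p s) ∧
  (∀ s ∈ Set.Icc (0 : ℝ) 1, M.f (M.gp s) (M.us s) = M.gp s) ∧
  (∀ s ∈ Set.Icc (0 : ℝ) 1, (M.gp s, M.us s) ∈ interior M.Z) ∧
  (∀ s ∈ Set.Icc (0 : ℝ) 1, ∀ i < M.No, M.B (M.gp s) ∩ M.O i = ∅) ∧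
  (∀ s ∈ Set.Icc (0 : ℝ) 1, ∀ xss uss, M.f xss uss = xss → M.g xss = M.p s →
      xss = M.gp s ∧ uss = M.us s)

/-- Assumption 3 (controllability): from any state `ε`-close to a steady state on the path
there is a feasible tuple whose tracking cost is bounded by `b‖x − gp s‖^σ`. -/
def Controllable (b ε σ : ℝ) : Prop :=
  ∀ s ∈ Set.Icc (0 : ℝ) 1, ∀ x : EuclideanSpace ℝ (Fin n), ‖x - M.gp s‖ ≤ ε →
    ∃ u xs, M.Feasible x u xs s ∧
      (∑ l ∈ Finset.range M.N, M.sc (xs l - M.gp s) (u l - M.us s)) ≤ b * ‖x - M.gp s‖ ^ σ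

end MPC


lemma aux_shift_feasible {n m q : ℕ} (M : MPC n m q)
    {x : EuclideanSpace ℝ (Fin n)} {u : ℕ → EuclideanSpace ℝ (Fin m)}
    {xs : ℕ → EuclideanSpace ℝ (Fin n)} {s : ℝ} (h : M.Feasible x u xs s) :
    M.Feasible (M.f x (u 0)) (fun l => u (min (l + 1) M.N))
      (fun l => xs (min (l + 1) M.N)) s := by
  obtain ⟨hs, h0, hdyn, hstdy, hout, hZ, hB⟩ := h
  refine ⟨hs, ?_, ?_, ?_, ?_, ?_, ?_⟩
  · show xs (min (0 + 1) M.N) = M.f x (u 0)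
    rcases Nat.eq_zero_or_pos M.N with hN | hN
    · have h1 : min (0 + 1) M.N = 0 := by omega
      rw [h1, ← h0]
      have := hstdy
      rw [hN, h0] at this
      rw [h0]; exact this
    · have h1 : min (0 + 1) M.N = 1 := by omega
      rw [h1, hdyn 0 hN, h0]
  · intro l hl
    show xs (min (l + 1 + 1) M.N) = M.f (xs (min (l + 1) M.N)) (u (min (l + 1) M.N))
    have h1 : min (l + 1) M.N = l + 1 := by omega
    rcases lt_or_ge (l + 1) M.N with h2 | h2
    · have h3 : min (l + 1 + 1) M.N = l + 1 + 1 := by omega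
      rw [h3, h1]; exact hdyn (l + 1) h2
    · have hN : l + 1 = M.N := by omega
      have h3 : min (l + 1 + 1) M.N = M.N := by omega
      rw [h3, h1, hN]; exact hstdy
  · show xs (min (M.N + 1) M.N) = M.f (xs (min (M.N + 1) M.N)) (u (min (M.N + 1) M.N))
    have h1 : min (M.N + 1) M.N = M.N := by omega
    rw [h1]; exact hstdy
  · show M.g (xs (min (M.N + 1) M.N)) = M.p s
    have h1 : min (M.N + 1) M.N = M.N := by omega
    rw [h1]; exact hout
  · intro l _
    exact hZ _ (min_le_right _ _)
  · intro l hl1 hlN i hi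
    exact hB (min (l + 1) M.N) (by omega) (min_le_right _ _) i hi

lemma aux_shift_cost {n m q : ℕ} (M : MPC n m q) (hsc0 : M.sc 0 0 = 0)
    (u : ℕ → EuclideanSpace ℝ (Fin m)) (xs : ℕ → EuclideanSpace ℝ (Fin n)) (s : ℝ) :
    M.Cost (fun l => u (min (l + 1) M.N)) (fun l => xs (min (l + 1) M.N)) s
      = M.Cost u xs s - M.sc (xs 0 - xs M.N) (u 0 - u M.N) := by
  unfold MPC.Cost
  have hminN : min (M.N + 1) M.N = M.N := by omega
  have hsum : (∑ l ∈ Finset.range M.N,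
      M.sc (xs (min (l + 1) M.N) - xs (min (M.N + 1) M.N))
        (u (min (l + 1) M.N) - u (min (M.N + 1) M.N)))
      = ∑ l ∈ Finset.range M.N, M.sc (xs (l + 1) - xs M.N) (u (l + 1) - u M.N) := by
    refine Finset.sum_congr rfl fun l hl => ?_
    have hl' := Finset.mem_range.mp hl
    have h1 : min (l + 1) M.N = l + 1 := by omega
    rw [h1, hminN]
  rw [hsum]
  have h2 := Finset.sum_range_succ' (fun l => M.sc (xs l - xs M.N) (u l - u M.N)) M.N
  have h3 := Finset.sum_range_succ (fun l => M.sc (xs l - xs M.N) (u l - u M.N)) M.N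
  have h4 : M.sc (xs M.N - xs M.N) (u M.N - u M.N) = 0 := by
    rw [sub_self, sub_self]; exact hsc0
  rw [h4] at h3
  linarith [h2, h3]

set_option maxHeartbeats 4000000 in
/-- **Theorem 1.** Under Assumptions 1–3 (continuity of `f`, closed `Z` with compact input
projection, the path/steady-state assumptions, the cost assumptions, controllability, and
attainment of the minimum), if problem (7) is feasible at the initial state `x0` (which is
collision-free), then there is a closed-loop realization `x (k+1) = f (x k) (u*_{0|k})`
driven by optimal feasible tuples for all `k` (so the problem remains feasible for all
`k > 0`), the closed loop satisfies the state/input and collision-avoidance constraints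
for all `k ≥ 0`, and `x k` converges to the target `x_T = gp 1`. -/
theorem mpc_recursive_feasibility_and_convergence
    {n m q : ℕ} (M : MPC n m q) (x0 : EuclideanSpace ℝ (Fin n))
    -- Assumption 1, item 1
    (hf : Continuous (Function.uncurry M.f))
    (hZclosed : IsClosed M.Z) (hZne : M.Z.Nonempty)
    (hZinputCompact : IsCompact (Prod.snd '' M.Z))
    -- Assumption 1, items 2–4
    (hpCont : ContinuousOn M.p (Set.Icc 0 1))
    (hp0 : M.p 0 = M.g x0)
    (hpath : M.SteadyStatePath)
    (Lgp : ℝ) (hLgp : 0 < Lgp)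
    (hgpLip : ∀ s ∈ Set.Icc (0 : ℝ) 1, ∀ t ∈ Set.Icc (0 : ℝ) 1,
      ‖M.gp s - M.gp t‖ ≤ Lgp * |s - t|)
    -- Assumption 2 (stage and offset cost)
    (hscCont : Continuous (Function.uncurry M.sc))
    (hscNonneg : ∀ x u, 0 ≤ M.sc x u) (hsc0 : M.sc 0 0 = 0)
    (hVoCont : ContinuousOn M.Vo (Set.Icc 0 1))
    (hVoConv : ConvexOn ℝ (Set.Icc 0 1) M.Vo)
    (hVo0 : M.Vo 0 = 0)
    (hVoNonneg : ∀ t ∈ Set.Icc (0 : ℝ) 1, 0 ≤ M.Vo t)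
    (αℓ αo : ℝ → ℝ) (hαℓ : IsClassKInfty αℓ) (hαo : IsClassK αo)
    (hsclb : ∀ x u, αℓ ‖x‖ ≤ M.sc x u)
    (hVolb : ∀ s ∈ Set.Icc (0 : ℝ) 1, αo |1 - s| ≤ M.Vo (1 - s))
    -- Assumption 3 (controllability)
    (b ε σ : ℝ) (hb : 0 < b) (hε : 0 < ε) (hσ : 1 < σ)
    (hctrl : M.Controllable b ε σ)
    -- the minimum of problem (7) is attained whenever the problem is feasible
    (hattain : ∀ x, (∃ u xs s, M.Feasible x u xs s) → ∃ u xs s, M.IsOptimal x u xs s)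
    -- initial feasibility and collision-free initial state
    (hfeas0 : ∃ u xs s, M.Feasible x0 u xs s)
    (hB0 : ∀ i < M.No, M.B x0 ∩ M.O i = ∅) :
    ∃ (x : ℕ → EuclideanSpace ℝ (Fin n))
      (uu : ℕ → ℕ → EuclideanSpace ℝ (Fin m))
      (xx : ℕ → ℕ → EuclideanSpace ℝ (Fin n)) (ss : ℕ → ℝ),
      x 0 = x0 ∧
      (∀ k, M.IsOptimal (x k) (uu k) (xx k) (ss k)) ∧
      (∀ k, x (k + 1) = M.f (x k) (uu k 0)) ∧
      (∀ k, (x k, uu k 0) ∈ M.Z) ∧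
      (∀ k, ∀ i < M.No, M.B (x k) ∩ M.O i = ∅) ∧
      Filter.Tendsto x Filter.atTop (nhds (M.gp 1)) := by
  classical
  obtain ⟨⟨hαℓc, hαℓm, hαℓ0⟩, hαℓinf⟩ := hαℓ
  obtain ⟨hαoc, hαom, hαo0⟩ := hαo
  obtain ⟨u0, xs0, s0, hopt0⟩ := hattain x0 hfeas0
  let Good : (EuclideanSpace ℝ (Fin n)) × (ℕ → EuclideanSpace ℝ (Fin m)) ×
      (ℕ → EuclideanSpace ℝ (Fin n)) × ℝ → Prop :=
    fun t => M.IsOptimal t.1 t.2.1 t.2.2.1 t.2.2.2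
  let F : {t // Good t} → {t // Good t} := fun t =>
    have h2 := hattain (M.f t.1.1 (t.1.2.1 0)) ⟨_, _, _, aux_shift_feasible M t.2.1⟩
    ⟨⟨M.f t.1.1 (t.1.2.1 0), h2.choose, h2.choose_spec.choose,
        h2.choose_spec.choose_spec.choose⟩,
      h2.choose_spec.choose_spec.choose_spec⟩
  let t0 : {t // Good t} := ⟨⟨x0, u0, xs0, s0⟩, hopt0⟩
  let orb : ℕ → {t // Good t} := fun k => F^[k] t0
  let x : ℕ → EuclideanSpace ℝ (Fin n) := fun k => (orb k).1.1
  let uu : ℕ → ℕ → EuclideanSpace ℝ (Fin m) := fun k => (orb k).1.2.1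
  let xx : ℕ → ℕ → EuclideanSpace ℝ (Fin n) := fun k => (orb k).1.2.2.1
  let ss : ℕ → ℝ := fun k => (orb k).1.2.2.2
  have hopt : ∀ k, M.IsOptimal (x k) (uu k) (xx k) (ss k) := fun k => (orb k).2
  have hx00 : x 0 = x0 := by
    show (F^[0] t0).1.1 = x0
    rw [Function.iterate_zero_apply]
  have hstep : ∀ k, x (k + 1) = M.f (x k) (uu k 0) := by
    intro k
    show (F^[k + 1] t0).1.1 = M.f ((F^[k] t0)).1.1 ((F^[k] t0).1.2.1 0)
    rw [Function.iterate_succ_apply']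
  clear_value x uu xx ss
  clear orb t0 F Good
  have hfe : ∀ k, M.Feasible (x k) (uu k) (xx k) (ss k) := fun k => (hopt k).1
  have hs : ∀ k, ss k ∈ Set.Icc (0 : ℝ) 1 := fun k => (hfe k).1
  have h0 : ∀ k, xx k 0 = x k := fun k => (hfe k).2.1
  have hstdy : ∀ k, xx k M.N = M.f (xx k M.N) (uu k M.N) := fun k => (hfe k).2.2.2.1
  have hout : ∀ k, M.g (xx k M.N) = M.p (ss k) := fun k => (hfe k).2.2.2.2.1
  have hZc : ∀ k, ∀ l ≤ M.N, (xx k l, uu k l) ∈ M.Z := fun k => (hfe k).2.2.2.2.2.1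
  have hBc : ∀ k, ∀ l, 1 ≤ l → l ≤ M.N → ∀ i < M.No, M.B (xx k l) ∩ M.O i = ∅ :=
    fun k => (hfe k).2.2.2.2.2.2
  have hgs : ∀ k, xx k M.N = M.gp (ss k) ∧ uu k M.N = M.us (ss k) :=
    fun k => hpath.2.2.2.2 (ss k) (hs k) _ _ (hstdy k).symm (hout k)
  have hIcc : ∀ k, (1 - ss k) ∈ Set.Icc (0 : ℝ) 1 :=
    fun k => ⟨by linarith [(hs k).2], by linarith [(hs k).1]⟩
  let V : ℕ → ℝ := fun k => M.Cost (uu k) (xx k) (ss k)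
  have hVdefk : ∀ k, V k = M.Cost (uu k) (xx k) (ss k) := fun _ => rfl
  clear_value V
  have hVoV : ∀ k, M.Vo (1 - ss k) ≤ V k := by
    intro k
    have h := Finset.sum_nonneg
      (fun l (_ : l ∈ Finset.range M.N) => hscNonneg (xx k l - xx k M.N) (uu k l - uu k M.N))
    rw [hVdefk k]
    unfold MPC.Cost
    linarith
  have hVnn : ∀ k, 0 ≤ V k := fun k => le_trans (hVoNonneg _ (hIcc k)) (hVoV k)
  have hdec : ∀ k, V (k + 1) ≤ V k - αℓ ‖x k - M.gp (ss k)‖ := by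
    intro k
    have hsf := aux_shift_feasible M (hfe k)
    rw [← hstep k] at hsf
    have hle := (hopt (k + 1)).2 _ _ _ hsf
    have hce := aux_shift_cost M hsc0 (uu k) (xx k) (ss k)
    have hlb := hsclb (xx k 0 - xx k M.N) (uu k 0 - uu k M.N)
    rw [h0 k, (hgs k).1] at hlb hce
    rw [hVdefk (k + 1), hVdefk k]
    linarith [hle, hce, hlb]
  have hαℓnn : ∀ t : ℝ, 0 ≤ t → 0 ≤ αℓ t := by
    intro t ht
    have := hαℓm.monotoneOn (Set.mem_Ici.mpr le_rfl) (Set.mem_Ici.mpr ht) ht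
    rwa [hαℓ0] at this
  have hVanti : Antitone V := antitone_nat_of_succ_le fun k => by
    have h1 := hdec k
    have h2 := hαℓnn ‖x k - M.gp (ss k)‖ (norm_nonneg _)
    linarith
  have hbdd : BddBelow (Set.range V) := ⟨0, by rintro y ⟨k, rfl⟩; exact hVnn k⟩
  have hVtend : Tendsto V atTop (𝓝 (⨅ k, V k)) := tendsto_atTop_ciInf hVanti hbdd
  set L := ⨅ k, V k with hLdef
  have hL0 : 0 ≤ L := le_ciInf hVnn
  have hLV : ∀ k, L ≤ V k := fun k => ciInf_le hbdd k
  have hdiff : Tendsto (fun k => V k - V (k + 1)) atTop (𝓝 0) := by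
    have h1 : Tendsto (fun k => V (k + 1)) atTop (𝓝 L) :=
      hVtend.comp (tendsto_add_atTop_nat 1)
    have := hVtend.sub h1
    simpa using this
  have he : ∀ δ : ℝ, 0 < δ → ∀ᶠ k in atTop, ‖x k - M.gp (ss k)‖ < δ := by
    intro δ hδ
    have hp : 0 < αℓ δ := by
      have := hαℓm (Set.mem_Ici.mpr le_rfl) (Set.mem_Ici.mpr hδ.le) hδ
      rwa [hαℓ0] at this
    have hev : ∀ᶠ k in atTop, V k - V (k + 1) < αℓ δ :=
      hdiff.eventually (eventually_lt_nhds hp)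
    filter_upwards [hev] with k hk
    by_contra hge
    push_neg at hge
    have h1 : αℓ δ ≤ αℓ ‖x k - M.gp (ss k)‖ :=
      hαℓm.monotoneOn (Set.mem_Ici.mpr hδ.le) (Set.mem_Ici.mpr (norm_nonneg _)) hge
    have h2 := hdec k
    linarith
  have hLzero : L = 0 := by
    by_contra hne
    have hLpos : 0 < L := lt_of_le_of_ne hL0 (Ne.symm hne)
    have h2L : (0 : ℝ) < 2 * Lgp := by linarith
    have hpow_pos : 0 < b * (2 * Lgp) ^ σ := mul_pos hb (Real.rpow_pos_of_pos h2L σ)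
    set c := L / (b * (2 * Lgp) ^ σ) with hc
    have hcpos : 0 < c := div_pos hLpos hpow_pos
    set lam := min (min 1 (ε / (2 * Lgp))) ((c / 2) ^ (1 / (σ - 1))) with hlamdef
    have hεL : 0 < ε / (2 * Lgp) := div_pos hε h2L
    have hrp : 0 < (c / 2) ^ (1 / (σ - 1)) := Real.rpow_pos_of_pos (by linarith) _
    have hlam0 : 0 < lam := lt_min (lt_min one_pos hεL) hrp
    have hlam1 : lam ≤ 1 := le_trans (min_le_left _ _) (min_le_left _ _)
    have hlamε : lam ≤ ε / (2 * Lgp) := le_trans (min_le_left _ _) (min_le_right _ _)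
    have hlamc : lam ≤ (c / 2) ^ (1 / (σ - 1)) := min_le_right _ _
    have hδm : 0 < min (ε / 2) (Lgp * lam) := lt_min (by linarith) (mul_pos hLgp hlam0)
    obtain ⟨k, hk⟩ := (he _ hδm).exists
    have hek1 : ‖x k - M.gp (ss k)‖ ≤ ε / 2 := le_of_lt (lt_of_lt_of_le hk (min_le_left _ _))
    have hek2 : ‖x k - M.gp (ss k)‖ ≤ Lgp * lam :=
      le_of_lt (lt_of_lt_of_le hk (min_le_right _ _))
    set s' := ss k + lam * (1 - ss k) with hs'def
    have hssk := hs k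
    have hprod : 0 ≤ lam * (1 - ss k) := mul_nonneg hlam0.le (by linarith [hssk.2])
    have hprod2 : 0 ≤ (1 - lam) * (1 - ss k) :=
      mul_nonneg (by linarith) (by linarith [hssk.2])
    have hs'mem : s' ∈ Set.Icc (0 : ℝ) 1 := by
      constructor
      · rw [hs'def]; linarith [hssk.1]
      · rw [hs'def]; nlinarith [hssk.2]
    have hdist1 : ‖x k - M.gp s'‖ ≤ ‖x k - M.gp (ss k)‖ + Lgp * lam := by
      have htri : ‖x k - M.gp s'‖ ≤ ‖x k - M.gp (ss k)‖ + ‖M.gp (ss k) - M.gp s'‖ := by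
        calc ‖x k - M.gp s'‖ = ‖(x k - M.gp (ss k)) + (M.gp (ss k) - M.gp s')‖ := by
              rw [sub_add_sub_cancel]
          _ ≤ ‖x k - M.gp (ss k)‖ + ‖M.gp (ss k) - M.gp s'‖ := norm_add_le _ _
      have hlip := hgpLip (ss k) (hs k) s' hs'mem
      have habs : |ss k - s'| = lam * (1 - ss k) := by
        have h5 : ss k - s' = -(lam * (1 - ss k)) := by rw [hs'def]; ring
        rw [h5, abs_neg, abs_of_nonneg hprod]
      rw [habs] at hlip
      have hle1 : Lgp * (lam * (1 - ss k)) ≤ Lgp * lam := by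
        nlinarith [mul_nonneg (mul_nonneg hLgp.le hlam0.le) hssk.1]
      linarith
    have hdist2 : ‖x k - M.gp s'‖ ≤ 2 * Lgp * lam := by linarith
    have hdistε : ‖x k - M.gp s'‖ ≤ ε := by
      have h6 : Lgp * lam ≤ Lgp * (ε / (2 * Lgp)) :=
        mul_le_mul_of_nonneg_left hlamε hLgp.le
      have h7 : Lgp * (ε / (2 * Lgp)) = ε / 2 := by field_simp
      linarith
    obtain ⟨u', xs', hfeas', hcost'⟩ := hctrl s' hs'mem (x k) hdistε
    have hterm := hpath.2.2.2.2 s' hs'mem (xs' M.N) (u' M.N)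
      hfeas'.2.2.2.1.symm hfeas'.2.2.2.2.1
    have hVk : V k ≤ M.Cost u' xs' s' := by
      rw [hVdefk k]; exact (hopt k).2 u' xs' s' hfeas'
    have hcost_eq : M.Cost u' xs' s'
        = (∑ l ∈ Finset.range M.N, M.sc (xs' l - M.gp s') (u' l - M.us s')) + M.Vo (1 - s') := by
      unfold MPC.Cost
      simp only [hterm.1, hterm.2]
    have hVoconv : M.Vo (1 - s') ≤ (1 - lam) * M.Vo (1 - ss k) := by
      have h01 : (0 : ℝ) ∈ Set.Icc (0 : ℝ) 1 := ⟨le_rfl, zero_le_one⟩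
      have hconv := hVoConv.2 (hIcc k) h01 (by linarith : (0:ℝ) ≤ 1 - lam) hlam0.le
        (by ring : (1 - lam) + lam = 1)
      simp only [smul_eq_mul, mul_zero, add_zero, hVo0] at hconv
      have harg : (1 - lam) * (1 - ss k) = 1 - s' := by rw [hs'def]; ring
      rw [harg] at hconv
      exact hconv
    have hrpow : ‖x k - M.gp s'‖ ^ σ ≤ (2 * Lgp * lam) ^ σ :=
      Real.rpow_le_rpow (norm_nonneg _) hdist2 (by linarith)
    have hchain : V k ≤ b * (2 * Lgp * lam) ^ σ + (1 - lam) * V k := by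
      have h3 : M.Vo (1 - s') ≤ (1 - lam) * V k :=
        le_trans hVoconv (mul_le_mul_of_nonneg_left (hVoV k) (by linarith))
      have h4 : b * ‖x k - M.gp s'‖ ^ σ ≤ b * (2 * Lgp * lam) ^ σ :=
        mul_le_mul_of_nonneg_left hrpow hb.le
      have h8 : M.Cost u' xs' s' ≤ b * ‖x k - M.gp s'‖ ^ σ + M.Vo (1 - s') := by
        rw [hcost_eq]
        have h9 := mul_le_mul_of_nonneg_left hcost' hb.le
        linarith
      linarith [hVk]
    have h5 : lam * V k ≤ b * (2 * Lgp * lam) ^ σ := by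
      have hring : V k - (1 - lam) * V k = lam * V k := by ring
      linarith [hchain, hring]
    have h6 : (2 * Lgp * lam) ^ σ = (2 * Lgp) ^ σ * lam ^ σ :=
      Real.mul_rpow h2L.le hlam0.le
    have h7 : lam ^ σ = lam ^ (σ - 1) * lam := by
      nth_rewrite 1 [show σ = (σ - 1) + 1 by ring]
      rw [Real.rpow_add hlam0, Real.rpow_one]
    have h6' : b * (2 * Lgp * lam) ^ σ = b * (2 * Lgp) ^ σ * lam ^ (σ - 1) * lam := by
      rw [h6, h7]; ring
    have h9 : L * lam ≤ (b * (2 * Lgp) ^ σ * lam ^ (σ - 1)) * lam := by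
      calc L * lam = lam * L := mul_comm _ _
        _ ≤ lam * V k := mul_le_mul_of_nonneg_left (hLV k) hlam0.le
        _ ≤ b * (2 * Lgp * lam) ^ σ := h5
        _ = (b * (2 * Lgp) ^ σ * lam ^ (σ - 1)) * lam := h6'
    have h8 : L ≤ b * (2 * Lgp) ^ σ * lam ^ (σ - 1) := le_of_mul_le_mul_right h9 hlam0
    have hσne : σ - 1 ≠ 0 := ne_of_gt (by linarith)
    have h10 : lam ^ (σ - 1) ≤ c / 2 := by
      have h12 := Real.rpow_le_rpow hlam0.le hlamc (by linarith : (0:ℝ) ≤ σ - 1)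
      rwa [← Real.rpow_mul (by positivity : (0:ℝ) ≤ c / 2),
        one_div_mul_cancel hσne, Real.rpow_one] at h12
    have h11 : b * (2 * Lgp) ^ σ * (c / 2) = L / 2 := by
      rw [hc]
      field_simp
    have hfin : L ≤ L / 2 := by
      calc L ≤ b * (2 * Lgp) ^ σ * lam ^ (σ - 1) := h8
        _ ≤ b * (2 * Lgp) ^ σ * (c / 2) := mul_le_mul_of_nonneg_left h10 hpow_pos.le
        _ = L / 2 := h11
    linarith
  rw [hLzero] at hVtend
  have hsev : ∀ δ : ℝ, 0 < δ → ∀ᶠ k in atTop, 1 - ss k < δ := by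
    intro δ hδ
    have hp : 0 < αo δ := by
      have := hαom (Set.mem_Ici.mpr le_rfl) (Set.mem_Ici.mpr hδ.le) hδ
      rwa [hαo0] at this
    have hev : ∀ᶠ k in atTop, V k < αo δ := hVtend.eventually (eventually_lt_nhds hp)
    filter_upwards [hev] with k hk
    by_contra hge
    push_neg at hge
    have h1 : αo δ ≤ αo (1 - ss k) :=
      hαom.monotoneOn (Set.mem_Ici.mpr hδ.le)
        (Set.mem_Ici.mpr (by linarith [(hs k).2])) hge
    have h2 := hVolb (ss k) (hs k)
    rw [abs_of_nonneg (by linarith [(hs k).2] : (0:ℝ) ≤ 1 - ss k)] at h2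
    linarith [hVoV k]
  refine ⟨x, uu, xx, ss, hx00, hopt, hstep, ?_, ?_, ?_⟩
  · intro k
    have h := hZc k 0 (Nat.zero_le _)
    rwa [h0 k] at h
  · intro k
    induction k with
    | zero =>
      rw [hx00]
      exact hB0
    | succ k ih =>
      intro i hi
      rcases Nat.eq_zero_or_pos M.N with hN | hN
      · have hx : x (k + 1) = x k := by
          rw [hstep k, ← h0 k]
          have h1 := hstdy k
          rw [hN] at h1
          exact h1.symm
        rw [hx]
        exact ih i hi
      · have hx : x (k + 1) = xx k 1 := by
          rw [hstep k, ← h0 k]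
          exact ((hfe k).2.2.1 0 hN).symm
        rw [hx]
        exact hBc k 1 le_rfl hN i hi
  · rw [Metric.tendsto_atTop]
    intro δ hδ
    obtain ⟨K, hK⟩ := Filter.eventually_atTop.mp
      ((he (δ / 2) (by linarith)).and (hsev (δ / (2 * Lgp)) (div_pos hδ (by linarith))))
    refine ⟨K, fun k hk => ?_⟩
    obtain ⟨h1, h2⟩ := hK k hk
    have hlip := hgpLip (ss k) (hs k) 1 ⟨zero_le_one, le_rfl⟩
    have habs : |ss k - 1| = 1 - ss k := by
      rw [abs_of_nonpos (by linarith [(hs k).2])]; ring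
    rw [habs] at hlip
    have htri : dist (x k) (M.gp 1) ≤ ‖x k - M.gp (ss k)‖ + ‖M.gp (ss k) - M.gp 1‖ := by
      rw [dist_eq_norm]
      calc ‖x k - M.gp 1‖ = ‖(x k - M.gp (ss k)) + (M.gp (ss k) - M.gp 1)‖ := by
            rw [sub_add_sub_cancel]
        _ ≤ _ := norm_add_le _ _
    have h3 : Lgp * (1 - ss k) < Lgp * (δ / (2 * Lgp)) := mul_lt_mul_of_pos_left h2 hLgp
    have h4 : Lgp * (δ / (2 * Lgp)) = δ / 2 := by field_simp
    linarith
end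
end

section
/- Suppose the controllability assumption holds. Along the MPC closed loop, denote by (u*_k, x*_k, s*_k) an optimal feasible tuple at x_k with artificial steady state x_{s_k}* = g_p(s*_k). If the sequence ‖x_k − x_{s_k}*‖ converges to 0 as k → ∞, then V_N(x_k) − V_o(1 − s*_k) → 0 as k → ∞. -/
open Filter Topology

noncomputable section

/-- **Lemma 1.** Suppose the controllability assumption holds. Along the MPC closed loop
`x (k+1) = f (x k) (u*_{0|k})` with optimal feasible tuples `(u* k, x* k, s* k)` at `x k`
and artificial steady state `x_{s_k}* = gp (s* k)`: if `‖x k − gp (s* k)‖ → 0`, then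
`V_N (x k) − V_o (1 − s* k) → 0`. -/
theorem mpc_lemma1_value_converges_to_offset
    {n m q : ℕ} (M : MPC n m q)
    (hpath : M.SteadyStatePath)
    (hscNonneg : ∀ x u, 0 ≤ M.sc x u)
    (b ε σ : ℝ) (hb : 0 < b) (hε : 0 < ε) (hσ : 1 < σ)
    (hctrl : M.Controllable b ε σ)
    (x : ℕ → EuclideanSpace ℝ (Fin n))
    (uu : ℕ → ℕ → EuclideanSpace ℝ (Fin m))
    (xx : ℕ → ℕ → EuclideanSpace ℝ (Fin n)) (ss : ℕ → ℝ)
    (hopt : ∀ k, M.IsOptimal (x k) (uu k) (xx k) (ss k))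
    (hstep : ∀ k, x (k + 1) = M.f (x k) (uu k 0))
    (hconv : Filter.Tendsto (fun k => ‖x k - M.gp (ss k)‖) Filter.atTop (nhds 0)) :
    Filter.Tendsto (fun k => M.Cost (uu k) (xx k) (ss k) - M.Vo (1 - ss k))
      Filter.atTop (nhds 0) := by
  have hlow : ∀ k, 0 ≤ M.Cost (uu k) (xx k) (ss k) - M.Vo (1 - ss k) := by
    intro k
    have h : 0 ≤ ∑ l ∈ Finset.range M.N, M.sc (xx k l - xx k M.N) (uu k l - uu k M.N) :=
      Finset.sum_nonneg fun l _ => hscNonneg _ _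
    simp only [MPC.Cost]
    linarith
  have hupper : ∀ k, ‖x k - M.gp (ss k)‖ ≤ ε →
      M.Cost (uu k) (xx k) (ss k) - M.Vo (1 - ss k) ≤ b * ‖x k - M.gp (ss k)‖ ^ σ := by
    intro k hk
    have hs : ss k ∈ Set.Icc (0:ℝ) 1 := (hopt k).1.1
    obtain ⟨u, xs, hfeas, hcost⟩ := hctrl (ss k) hs (x k) hk
    have hterm := hpath.2.2.2.2 (ss k) hs (xs M.N) (u M.N)
      hfeas.2.2.2.1.symm hfeas.2.2.2.2.1
    have hopt' := (hopt k).2 u xs (ss k) hfeas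
    have hcost' : M.Cost u xs (ss k) ≤ b * ‖x k - M.gp (ss k)‖ ^ σ + M.Vo (1 - ss k) := by
      simp only [MPC.Cost, hterm.1, hterm.2]
      linarith
    linarith
  have hbound : Filter.Tendsto (fun k => b * ‖x k - M.gp (ss k)‖ ^ σ)
      Filter.atTop (nhds 0) := by
    have h1 : Filter.Tendsto (fun k => ‖x k - M.gp (ss k)‖ ^ σ) Filter.atTop (nhds 0) := by
      have hc := (Real.continuousAt_rpow_const 0 σ (Or.inr (by linarith))).tendsto
      have h2 := hc.comp hconv
      simpa [Function.comp_def, Real.zero_rpow (by linarith : σ ≠ 0)] using h2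
    simpa using h1.const_mul b
  refine tendsto_of_tendsto_of_tendsto_of_le_of_le' tendsto_const_nhds hbound
    (Filter.Eventually.of_forall hlow) ?_
  have hev : ∀ᶠ k in Filter.atTop, ‖x k - M.gp (ss k)‖ ≤ ε :=
    (hconv.eventually (eventually_lt_nhds hε)).mono fun k hk => hk.le
  exact hev.mono fun k hk => hupper k hk
end
end

section
/- Suppose all the MPC setup assumptions hold (including the controllability assumption with constants b, ε > 0 and σ > 1, convexity of V_o with V_o(0) = 0, Lipschitz continuity of g_p, and the class-K∞ lower bound α_ℓ on ℓ). Along the MPC closed loop, denote by (u*_k, x*_k, s*_k) an optimal feasible tuple at x_k with artificial steady state x_{s_k}* = g_p(s*_k). If s*_k converges to some s_∞ ∈ [0,1] and ‖x_k − x_{s_k}*‖ → 0 as k → ∞, then s_∞ = 1. -/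
open Filter Topology

noncomputable section

/-- **Lemma 2.** Under the MPC setup assumptions (controllability with `b, ε > 0`, `σ > 1`,
convex `V_o` with `V_o 0 = 0`, Lipschitz `g_p`, class-`K∞` lower bound `α_ℓ` on the stage
cost, and class-`K` lower bound `α_o` on the offset cost), along the MPC closed loop with
optimal feasible tuples `(u* k, x* k, s* k)` and artificial steady state `gp (s* k)`:
if `s* k → s∞ ∈ [0,1]` and `‖x k − gp (s* k)‖ → 0`, then `s∞ = 1`. -/
theorem mpc_lemma2_path_parameter_converges_to_one
    {n m q : ℕ} (M : MPC n m q)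
    (hpath : M.SteadyStatePath)
    (Lgp : ℝ) (hLgp : 0 < Lgp)
    (hgpLip : ∀ s ∈ Set.Icc (0 : ℝ) 1, ∀ t ∈ Set.Icc (0 : ℝ) 1,
      ‖M.gp s - M.gp t‖ ≤ Lgp * |s - t|)
    (hscNonneg : ∀ x u, 0 ≤ M.sc x u)
    (hVoConv : ConvexOn ℝ (Set.Icc 0 1) M.Vo)
    (hVo0 : M.Vo 0 = 0)
    (hVoNonneg : ∀ t ∈ Set.Icc (0 : ℝ) 1, 0 ≤ M.Vo t)
    (αℓ αo : ℝ → ℝ) (hαℓ : IsClassKInfty αℓ) (hαo : IsClassK αo)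
    (hsclb : ∀ x u, αℓ ‖x‖ ≤ M.sc x u)
    (hVolb : ∀ s ∈ Set.Icc (0 : ℝ) 1, αo |1 - s| ≤ M.Vo (1 - s))
    (b ε σ : ℝ) (hb : 0 < b) (hε : 0 < ε) (hσ : 1 < σ)
    (hctrl : M.Controllable b ε σ)
    (x : ℕ → EuclideanSpace ℝ (Fin n))
    (uu : ℕ → ℕ → EuclideanSpace ℝ (Fin m))
    (xx : ℕ → ℕ → EuclideanSpace ℝ (Fin n)) (ss : ℕ → ℝ)
    (hopt : ∀ k, M.IsOptimal (x k) (uu k) (xx k) (ss k))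
    (hstep : ∀ k, x (k + 1) = M.f (x k) (uu k 0))
    (sinf : ℝ) (hsinf : sinf ∈ Set.Icc (0 : ℝ) 1)
    (hsconv : Filter.Tendsto ss Filter.atTop (nhds sinf))
    (hxconv : Filter.Tendsto (fun k => ‖x k - M.gp (ss k)‖) Filter.atTop (nhds 0)) :
    sinf = 1 := by
  by_contra hne
  have hs1 : sinf < 1 := lt_of_le_of_ne hsinf.2 hne
  set c : ℝ := (1 - sinf) / 2 with hc
  have hcpos : 0 < c := by rw [hc]; linarith
  set A : ℝ := αo c with hA
  have hApos : 0 < A := by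
    have := hαo.2.1 (Set.self_mem_Ici) (le_of_lt hcpos) hcpos
    rw [hαo.2.2] at this
    exact this
  have h2L : 0 < 2 * Lgp := by linarith
  set K : ℝ := b * (2 * Lgp) ^ σ with hK
  have hKpos : 0 < K := mul_pos hb (Real.rpow_pos_of_pos h2L σ)
  set δ0 : ℝ := (A / (2 * K)) ^ (1 / (σ - 1)) with hδ0
  have hδ0pos : 0 < δ0 := Real.rpow_pos_of_pos (by positivity) _
  set δ : ℝ := min c (min (ε / (2 * Lgp)) δ0) with hδ
  have hδpos : 0 < δ := lt_min hcpos (lt_min (by positivity) hδ0pos)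
  have hδc : δ ≤ c := min_le_left _ _
  have hδε : 2 * Lgp * δ ≤ ε := by
    have h1 : δ ≤ ε / (2 * Lgp) := le_trans (min_le_right _ _) (min_le_left _ _)
    rw [mul_comm]
    exact (le_div_iff₀ h2L).mp h1
  have hδδ0 : δ ≤ δ0 := le_trans (min_le_right _ _) (min_le_right _ _)
  -- key smallness inequality
  have hKey : b * (2 * Lgp * δ) ^ σ < δ * A := by
    have hmul : (2 * Lgp * δ) ^ σ = (2 * Lgp) ^ σ * δ ^ σ :=
      Real.mul_rpow h2L.le hδpos.le
    have hsplit : δ ^ σ = δ ^ (σ - 1) * δ := by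
      have := Real.rpow_add hδpos (σ - 1) 1
      rw [sub_add_cancel, Real.rpow_one] at this
      exact this
    have hδ0pow : δ0 ^ (σ - 1) = A / (2 * K) := by
      rw [hδ0, ← Real.rpow_mul (by positivity : (0:ℝ) ≤ A / (2 * K)), one_div,
        inv_mul_cancel₀ (by linarith : σ - 1 ≠ 0), Real.rpow_one]
    have hle : δ ^ (σ - 1) ≤ A / (2 * K) := by
      rw [← hδ0pow]
      exact Real.rpow_le_rpow hδpos.le hδδ0 (by linarith)
    calc b * (2 * Lgp * δ) ^ σ = K * (δ ^ (σ - 1) * δ) := by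
          rw [hmul, hsplit, hK]; ring
      _ ≤ K * ((A / (2 * K)) * δ) := by
          apply mul_le_mul_of_nonneg_left _ hKpos.le
          exact mul_le_mul_of_nonneg_right hle hδpos.le
      _ = A * δ / 2 := by field_simp
      _ < δ * A := by nlinarith [mul_pos hδpos hApos]
  -- choose a large k
  have h1 : ∀ᶠ k in atTop, |ss k - sinf| < c := by
    have := Metric.tendsto_atTop.mp hsconv c hcpos
    obtain ⟨N0, hN0⟩ := this
    exact Filter.eventually_atTop.mpr ⟨N0, fun k hk => by
      have := hN0 k hk; rwa [Real.dist_eq] at this⟩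
  have h2 : ∀ᶠ k in atTop, ‖x k - M.gp (ss k)‖ < Lgp * δ := by
    have := Metric.tendsto_atTop.mp hxconv (Lgp * δ) (by positivity)
    obtain ⟨N0, hN0⟩ := this
    exact Filter.eventually_atTop.mpr ⟨N0, fun k hk => by
      have := hN0 k hk
      rwa [Real.dist_eq, sub_zero, abs_of_nonneg (norm_nonneg _)] at this⟩
  obtain ⟨k, hk1, hk2⟩ := (h1.and h2).exists
  -- setup at index k
  obtain ⟨hfeask, hoptk⟩ := hopt k
  have hss : ss k ∈ Set.Icc (0 : ℝ) 1 := hfeask.1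
  set t : ℝ := 1 - ss k with ht
  have htc : c < t := by
    have : ss k - sinf < c := lt_of_le_of_lt (le_abs_self _) hk1
    rw [ht, hc]; linarith
  have htpos : 0 < t := lt_trans hcpos htc
  have ht1 : t ≤ 1 := by rw [ht]; linarith [hss.1]
  set s' : ℝ := ss k + δ with hs'def
  have hs' : s' ∈ Set.Icc (0 : ℝ) 1 := by
    constructor
    · linarith [hss.1]
    · rw [hs'def]; have : δ < t := lt_of_le_of_lt hδc htc; rw [ht] at this; linarith
  have hδt : δ < t := lt_of_le_of_lt hδc htc
  -- distance bound
  have hdist : ‖x k - M.gp s'‖ ≤ 2 * Lgp * δ := by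
    have htri : ‖x k - M.gp s'‖ ≤ ‖x k - M.gp (ss k)‖ + ‖M.gp (ss k) - M.gp s'‖ := by
      calc ‖x k - M.gp s'‖ = ‖(x k - M.gp (ss k)) + (M.gp (ss k) - M.gp s')‖ := by
            rw [sub_add_sub_cancel]
        _ ≤ _ := norm_add_le _ _
    have hlip := hgpLip (ss k) hss s' hs'
    have habs : |ss k - s'| = δ := by
      rw [hs'def]; rw [show ss k - (ss k + δ) = -δ by ring, abs_neg, abs_of_pos hδpos]
    rw [habs] at hlip
    calc ‖x k - M.gp s'‖ ≤ ‖x k - M.gp (ss k)‖ + Lgp * δ := by linarith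
      _ ≤ Lgp * δ + Lgp * δ := by linarith
      _ = 2 * Lgp * δ := by ring
  have hdε : ‖x k - M.gp s'‖ ≤ ε := le_trans hdist hδε
  -- controllability candidate
  obtain ⟨u', xs', hfeas', hsum⟩ := hctrl s' hs' (x k) hdε
  have hssEq := hfeas'.2.2.2.1
  have hg' := hfeas'.2.2.2.2.1
  obtain ⟨hxsN, huN⟩ := hpath.2.2.2.2 s' hs' (xs' M.N) (u' M.N) hssEq.symm hg'
  -- cost comparison
  have hcost' : M.Cost u' xs' s' ≤ b * ‖x k - M.gp s'‖ ^ σ + M.Vo (1 - s') := by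
    unfold MPC.Cost
    rw [hxsN, huN]
    linarith
  have hub : M.Cost (uu k) (xx k) (ss k) ≤ b * (2 * Lgp * δ) ^ σ + M.Vo (1 - s') := by
    have h0 := hoptk u' xs' s' hfeas'
    have hpow : b * ‖x k - M.gp s'‖ ^ σ ≤ b * (2 * Lgp * δ) ^ σ :=
      mul_le_mul_of_nonneg_left
        (Real.rpow_le_rpow (norm_nonneg _) hdist (by linarith)) hb.le
    linarith
  have hlb : M.Vo (1 - ss k) ≤ M.Cost (uu k) (xx k) (ss k) := by
    unfold MPC.Cost
    have : (0:ℝ) ≤ ∑ l ∈ Finset.range M.N, M.sc (xx k l - xx k M.N) (uu k l - uu k M.N) :=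
      Finset.sum_nonneg fun l _ => hscNonneg _ _
    linarith
  -- convexity step
  have htmem : t ∈ Set.Icc (0 : ℝ) 1 := ⟨htpos.le, ht1⟩
  have h0mem : (0 : ℝ) ∈ Set.Icc (0 : ℝ) 1 := ⟨le_refl _, zero_le_one⟩
  have hl0 : (0:ℝ) ≤ δ / t := by positivity
  have hl1 : (0:ℝ) ≤ 1 - δ / t := by
    have : δ / t ≤ 1 := (div_le_one htpos).mpr hδt.le
    linarith
  have hconv := hVoConv.2 htmem h0mem hl1 hl0 (by ring)
  have harg : (1 - δ / t) • t + (δ / t) • (0:ℝ) = t - δ := by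
    simp only [smul_eq_mul]
    field_simp
    ring
  rw [harg, smul_eq_mul, smul_eq_mul, hVo0, mul_zero, add_zero] at hconv
  -- combine
  have hts' : 1 - s' = t - δ := by rw [hs'def, ht]; ring
  rw [hts'] at hub
  have hchain : M.Vo t ≤ b * (2 * Lgp * δ) ^ σ + (1 - δ / t) * M.Vo t := by
    have := le_trans hlb hub
    rw [← ht] at this
    linarith
  have hVot_nonneg : 0 ≤ M.Vo t := hVoNonneg t htmem
  have hstep1 : (δ / t) * M.Vo t ≤ b * (2 * Lgp * δ) ^ σ := by
    have hexp : (1 - δ / t) * M.Vo t = M.Vo t - (δ / t) * M.Vo t := by ring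
    linarith
  have hstep2 : δ * M.Vo t ≤ (δ / t) * M.Vo t := by
    apply mul_le_mul_of_nonneg_right _ hVot_nonneg
    rw [le_div_iff₀ htpos]
    calc δ * t ≤ δ * 1 := mul_le_mul_of_nonneg_left ht1 hδpos.le
      _ = δ := mul_one δ
  have hAle : A ≤ M.Vo t := by
    have hαole : αo c ≤ αo t :=
      hαo.2.1.monotoneOn (le_of_lt hcpos) (le_of_lt htpos) htc.le
    have hVolb' := hVolb (ss k) hss
    rw [show |1 - ss k| = t by rw [← ht, abs_of_pos htpos]] at hVolb'
    rw [← ht] at hVolb'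
    exact le_trans hαole hVolb'
  have : δ * A ≤ b * (2 * Lgp * δ) ^ σ := by
    calc δ * A ≤ δ * M.Vo t := mul_le_mul_of_nonneg_left hAle hδpos.le
      _ ≤ (δ / t) * M.Vo t := hstep2
      _ ≤ _ := hstep1
  linarith
end
end

section
/- (Lower bound on the optimal value function.) Suppose the class-K∞ lower bound α_ℓ(‖x‖) ≤ ℓ(x,u) and the class-K lower bound α_o(|1−s|) ≤ V_o(1−s) hold, and that g_p is Lipschitz with constant L_{g_p}. Then there exists a class-K∞ function α (one may take α(r) = min{α_ℓ(r), α̂_o(L_{g_p}^{-1} r)} for a class-K∞ extension α̂_o of α_o) such that for every state x at which the optimization problem is feasible, V_N(x) ≥ (1/2) α(‖x − x_T‖), where x_T = g_p(1). -/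
open Filter Topology

noncomputable section

/-- **Lower bound on the optimal value function.** Under the class-`K∞` bound
`α_ℓ(‖x‖) ≤ ℓ(x,u)`, the class-`K` bound `α_o(|1−s|) ≤ V_o(1−s)`, Lipschitz continuity of
`g_p`, and the steady-state path assumptions, there is a class-`K∞` function `α` such that
every tuple feasible at `x` has cost at least `(1/2) α (‖x − x_T‖)`; in particular
`V_N x ≥ (1/2) α (‖x − x_T‖)` with `x_T = gp 1`. -/
theorem mpc_value_function_lower_bound
    {n m q : ℕ} (M : MPC n m q)
    (hpath : M.SteadyStatePath)
    (Lgp : ℝ) (hLgp : 0 < Lgp)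
    (hgpLip : ∀ s ∈ Set.Icc (0 : ℝ) 1, ∀ t ∈ Set.Icc (0 : ℝ) 1,
      ‖M.gp s - M.gp t‖ ≤ Lgp * |s - t|)
    (hscNonneg : ∀ x u, 0 ≤ M.sc x u)
    (hVoNonneg : ∀ t ∈ Set.Icc (0 : ℝ) 1, 0 ≤ M.Vo t)
    (αℓ αo : ℝ → ℝ) (hαℓ : IsClassKInfty αℓ) (hαo : IsClassK αo)
    (hsclb : ∀ x u, αℓ ‖x‖ ≤ M.sc x u)
    (hVolb : ∀ s ∈ Set.Icc (0 : ℝ) 1, αo |1 - s| ≤ M.Vo (1 - s)) :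
    ∃ α : ℝ → ℝ, IsClassKInfty α ∧
      ∀ (x : EuclideanSpace ℝ (Fin n)) (u : ℕ → EuclideanSpace ℝ (Fin m))
        (xs : ℕ → EuclideanSpace ℝ (Fin n)) (s : ℝ),
        M.Feasible x u xs s →
          (1 / 2) * α ‖x - M.gp 1‖ ≤ M.Cost u xs s := by
  classical
  obtain ⟨⟨hαℓc, hαℓm, hαℓ0⟩, hαℓtop⟩ := hαℓ
  obtain ⟨hαoc, hαom, hαo0⟩ := hαo
  -- class K∞ extension of αo
  set β : ℝ → ℝ := fun t => αo (min t 1) + max (t - 1) 0 with hβdef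
  have hβ0 : β 0 = 0 := by simp [hβdef, hαo0]
  have hαonn : ∀ t, 0 ≤ t → 0 ≤ αo t := by
    intro t ht
    rcases eq_or_lt_of_le ht with h | h
    · simp [← h, hαo0]
    · have := hαom (Set.self_mem_Ici) (le_of_lt h) h
      linarith [hαo0]
  have hβm : StrictMonoOn β (Set.Ici 0) := by
    intro s hs t ht hst
    simp only [hβdef]
    by_cases h : t ≤ 1
    · have hs1 : min s 1 = s := min_eq_left (by linarith)
      have ht1 : min t 1 = t := min_eq_left h
      have hms : max (s - 1) 0 = 0 := max_eq_right (by linarith)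
      have hmt : max (t - 1) 0 = 0 := max_eq_right (by linarith)
      rw [hs1, ht1, hms, hmt]
      have := hαom hs ht hst
      linarith
    · push_neg at h
      have hmt : max (t - 1) 0 = t - 1 := max_eq_left (by linarith)
      have h1 : αo (min s 1) ≤ αo 1 := by
        rcases le_or_gt s 1 with hs1 | hs1
        · rw [min_eq_left hs1]
          rcases eq_or_lt_of_le hs1 with h' | h'
          · rw [h']
          · exact le_of_lt (hαom hs (Set.mem_Ici.2 zero_le_one) h')
        · rw [min_eq_right (le_of_lt hs1)]
      have h2 : max (s - 1) 0 < t - 1 := by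
        rcases le_or_gt (s - 1) 0 with h' | h'
        · rw [max_eq_right h']; linarith
        · rw [max_eq_left (le_of_lt h')]; linarith
      rw [min_eq_right (le_of_lt h), hmt]
      linarith
  have hβc : ContinuousOn β (Set.Ici 0) := by
    apply ContinuousOn.add
    · apply hαoc.comp (Continuous.continuousOn (by continuity))
      intro t ht
      exact Set.mem_Ici.2 (le_min ht zero_le_one)
    · exact Continuous.continuousOn (by continuity)
  have hβtop : Tendsto β atTop atTop := by
    apply tendsto_atTop_mono' atTop (f₁ := fun t => t - 1)
    · filter_upwards [eventually_ge_atTop (0 : ℝ)] with t ht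
      have h1 : 0 ≤ αo (min t 1) := hαonn _ (le_min ht zero_le_one)
      have h2 : t - 1 ≤ max (t - 1) 0 := le_max_left _ _
      simp only [hβdef]; linarith
    · exact tendsto_atTop_add_const_right _ _ tendsto_id
  have h2L : (0:ℝ) < 2 * Lgp := by linarith
  set α : ℝ → ℝ := fun r => min (αℓ (r / 2)) (β (r / (2 * Lgp))) with hαdef
  have hmaps1 : ∀ r : ℝ, 0 ≤ r → (0:ℝ) ≤ r / 2 := fun r hr => by positivity
  have hmaps2 : ∀ r : ℝ, 0 ≤ r → (0:ℝ) ≤ r / (2 * Lgp) := fun r hr => by positivity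
  have hαK : IsClassKInfty α := by
    refine ⟨⟨?_, ?_, ?_⟩, ?_⟩
    · have c1 : ContinuousOn (fun r : ℝ => αℓ (r / 2)) (Set.Ici 0) :=
        hαℓc.comp (continuous_id.div_const 2).continuousOn
          (fun r hr => Set.mem_Ici.2 (hmaps1 r hr))
      have c2 : ContinuousOn (fun r : ℝ => β (r / (2 * Lgp))) (Set.Ici 0) :=
        hβc.comp (continuous_id.div_const _).continuousOn
          (fun r hr => Set.mem_Ici.2 (hmaps2 r hr))
      exact c1.inf c2
    · intro r hr t ht hrt
      have h1 : αℓ (r / 2) < αℓ (t / 2) :=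
        hαℓm (Set.mem_Ici.2 (hmaps1 r hr)) (Set.mem_Ici.2 (hmaps1 t ht))
          (by linarith)
      have h2 : β (r / (2 * Lgp)) < β (t / (2 * Lgp)) :=
        hβm (Set.mem_Ici.2 (hmaps2 r hr)) (Set.mem_Ici.2 (hmaps2 t ht))
          (by gcongr)
      exact min_lt_min h1 h2
    · simp [hαdef, hαℓ0, hβ0]
    · rw [tendsto_atTop]
      intro b
      have t1 : Tendsto (fun r : ℝ => αℓ (r / 2)) atTop atTop :=
        hαℓtop.comp (tendsto_id.atTop_div_const (by norm_num))
      have t2 : Tendsto (fun r : ℝ => β (r / (2 * Lgp))) atTop atTop :=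
        hβtop.comp (tendsto_id.atTop_div_const h2L)
      filter_upwards [tendsto_atTop.1 t1 b, tendsto_atTop.1 t2 b] with r h1 h2
      exact le_min h1 h2
  refine ⟨α, hαK, ?_⟩
  intro x u xs s hF
  obtain ⟨hs, hx0, hdyn, hss, hout, hZ, hO⟩ := hF
  obtain ⟨hs0, hs1⟩ := hs
  have hTN : xs M.N = M.gp s :=
    (hpath.2.2.2.2 s ⟨hs0, hs1⟩ (xs M.N) (u M.N) hss.symm hout).1
  set a := ‖x - M.gp s‖ with hadef
  set b := Lgp * (1 - s) with hbdef
  have ha0 : 0 ≤ a := norm_nonneg _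
  have hb0 : 0 ≤ b := by
    apply mul_nonneg (le_of_lt hLgp); linarith
  set r := ‖x - M.gp 1‖ with hrdef
  have hr0 : 0 ≤ r := norm_nonneg _
  have hrab : r ≤ a + b := by
    have h1 : x - M.gp 1 = (x - M.gp s) + (M.gp s - M.gp 1) := by abel
    have h2 : ‖M.gp s - M.gp 1‖ ≤ Lgp * |s - 1| :=
      hgpLip s ⟨hs0, hs1⟩ 1 (by norm_num)
    have h3 : |s - 1| = 1 - s := by
      rw [abs_of_nonpos (by linarith)]; ring
    calc r = ‖(x - M.gp s) + (M.gp s - M.gp 1)‖ := by rw [hrdef, h1]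
    _ ≤ ‖x - M.gp s‖ + ‖M.gp s - M.gp 1‖ := norm_add_le _ _
    _ ≤ a + b := by rw [hbdef, ← h3]; exact add_le_add le_rfl h2
  have hsumnn : 0 ≤ ∑ l ∈ Finset.range M.N, M.sc (xs l - xs M.N) (u l - u M.N) :=
    Finset.sum_nonneg fun l _ => hscNonneg _ _
  have hVonn : 0 ≤ M.Vo (1 - s) := hVoNonneg _ ⟨by linarith, by linarith⟩
  have hαmono := hαK.1.2.1.monotoneOn
  have hkey : α r ≤ M.Cost u xs s := by
    rcases le_or_gt a b with hab | hab
    · -- offset cost dominates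
      have hrb : r / (2 * Lgp) ≤ 1 - s := by
        rw [div_le_iff₀ h2L]
        have : (1 - s) * (2 * Lgp) = 2 * b := by rw [hbdef]; ring
        rw [this]; linarith
      have h1 : α r ≤ β (r / (2 * Lgp)) := min_le_right _ _
      have h2 : β (r / (2 * Lgp)) ≤ β (1 - s) :=
        hβm.monotoneOn (Set.mem_Ici.2 (hmaps2 r hr0))
          (Set.mem_Ici.2 (by linarith)) hrb
      have h3 : β (1 - s) = αo (1 - s) := by
        simp only [hβdef]
        rw [min_eq_left (by linarith), max_eq_right (by linarith)]
        ring
      have h4 : αo (1 - s) ≤ M.Vo (1 - s) := by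
        have := hVolb s ⟨hs0, hs1⟩
        rwa [abs_of_nonneg (by linarith)] at this
      have h5 : α r ≤ M.Vo (1 - s) := h1.trans (h2.trans (h3.le.trans h4))
      calc α r ≤ M.Vo (1 - s) := h5
      _ ≤ M.Cost u xs s := by
        unfold MPC.Cost; linarith
    · -- stage cost dominates
      have hN1 : 1 ≤ M.N := by
        by_contra hN
        push_neg at hN
        have hN0 : M.N = 0 := Nat.lt_one_iff.1 hN
        rw [hN0] at hTN
        have ha : a = 0 := by rw [hadef, ← hx0, hTN, sub_self, norm_zero]
        rw [ha] at hab; linarith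
      have hra : r / 2 ≤ a := by linarith [hrab]
      have h1 : α r ≤ αℓ (r / 2) := min_le_left _ _
      have h2 : αℓ (r / 2) ≤ αℓ a :=
        hαℓm.monotoneOn (Set.mem_Ici.2 (hmaps1 r hr0)) (Set.mem_Ici.2 ha0) hra
      have h3 : αℓ a ≤ M.sc (xs 0 - xs M.N) (u 0 - u M.N) := by
        rw [hadef, hx0, hTN]; exact hsclb _ _
      have h4 : M.sc (xs 0 - xs M.N) (u 0 - u M.N) ≤
          ∑ l ∈ Finset.range M.N, M.sc (xs l - xs M.N) (u l - u M.N) :=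
        Finset.single_le_sum (f := fun l => M.sc (xs l - xs M.N) (u l - u M.N))
          (fun l _ => hscNonneg _ _) (Finset.mem_range.2 hN1)
      unfold MPC.Cost
      linarith
  have hαr0 : 0 ≤ α r := by
    have := hαmono Set.self_mem_Ici (Set.mem_Ici.2 hr0) hr0
    have hα0 : α 0 = 0 := hαK.1.2.2
    linarith
  linarith
end
end

section
/- (Decrease of the optimal value function along the closed loop.) Suppose α_ℓ(‖x‖) ≤ ℓ(x,u) for a class-K∞ function α_ℓ. Along the MPC closed loop x_{k+1} = f(x_k, u*_{0|k}), where (u*_k, x*_k, s*_k) is an optimal feasible tuple at x_k with artificial steady state x_{s_k}* = x*_{N|k} and input u_{s_k}* = u*_{N|k}, it holds that V_N(x_{k+1}) − V_N(x_k) ≤ −ℓ(x_k − x_{s_k}*, u*_{0|k} − u_{s_k}*) ≤ −α_ℓ(‖x_k − x_{s_k}*‖) ≤ 0. -/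
open Filter Topology

noncomputable section

/-- **Decrease of the optimal value function along the closed loop (eq. (16)).**
With a positive-definite stage cost bounded below by a class-`K∞` function `α_ℓ`,
if `(u, xs, s)` is an optimal feasible tuple at `x` (so `V_N x = J_N(u, xs, s)`,
with artificial steady state `x_s* = xs N` and input `u_s* = u N`) and
`(u', xs', s')` is an optimal feasible tuple at the successor `x⁺ = f x (u 0)`
(so `V_N x⁺ = J_N(u', xs', s')`), then
`V_N x⁺ − V_N x ≤ −ℓ(x − x_s*, u 0 − u_s*) ≤ −α_ℓ(‖x − x_s*‖) ≤ 0`. -/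
theorem mpc_value_function_decrease
    {n m q : ℕ} (M : MPC n m q) (hN : 0 < M.N)
    (hscNonneg : ∀ x u, 0 ≤ M.sc x u) (hsc0 : M.sc 0 0 = 0)
    (αℓ : ℝ → ℝ) (hαℓ : IsClassKInfty αℓ)
    (hsclb : ∀ x u, αℓ ‖x‖ ≤ M.sc x u)
    (x : EuclideanSpace ℝ (Fin n))
    (u : ℕ → EuclideanSpace ℝ (Fin m)) (xs : ℕ → EuclideanSpace ℝ (Fin n)) (s : ℝ)
    (hopt : M.IsOptimal x u xs s)
    (u' : ℕ → EuclideanSpace ℝ (Fin m)) (xs' : ℕ → EuclideanSpace ℝ (Fin n)) (s' : ℝ)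
    (hopt' : M.IsOptimal (M.f x (u 0)) u' xs' s') :
    M.Cost u' xs' s' - M.Cost u xs s ≤ -(M.sc (x - xs M.N) (u 0 - u M.N)) ∧
    -(M.sc (x - xs M.N) (u 0 - u M.N)) ≤ -(αℓ ‖x - xs M.N‖) ∧
    -(αℓ ‖x - xs M.N‖) ≤ 0 := by
  obtain ⟨⟨hs, hx0, hdyn, hterm, hout, hZ, hobs⟩, _⟩ := hopt
  -- shifted candidate
  set ut : ℕ → EuclideanSpace ℝ (Fin m) := fun l => if l < M.N then u (l + 1) else u M.N with hut
  set xt : ℕ → EuclideanSpace ℝ (Fin n) := fun l => if l < M.N then xs (l + 1) else xs M.N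
    with hxt
  have hutN : ut M.N = u M.N := by simp [hut]
  have hxtN : xt M.N = xs M.N := by simp [hxt]
  have hfeasShift : M.Feasible (M.f x (u 0)) ut xt s := by
    refine ⟨hs, ?_, ?_, ?_, ?_, ?_, ?_⟩
    · simp only [hxt, hN, if_pos]
      rw [hdyn 0 hN, hx0]
    · intro l hl
      by_cases h1 : l + 1 < M.N
      · simp only [hxt, hut, hl, h1, if_pos]
        exact hdyn (l + 1) h1
      · have hEq : l + 1 = M.N := by omega
        have h2 : xt (l + 1) = xs M.N := by simp [hxt, hEq]
        rw [h2]
        simp only [hxt, hut, hl, if_pos]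
        rw [hEq]
        exact hterm
    · rw [hutN, hxtN]; exact hterm
    · rw [hxtN]; exact hout
    · intro l hl
      by_cases h1 : l < M.N
      · simp only [hxt, hut, h1, if_pos]
        exact hZ (l + 1) (by omega)
      · simp only [hxt, hut, h1, if_neg, not_false_iff]
        exact hZ M.N le_rfl
    · intro l hl1 hl2 i hi
      by_cases h1 : l < M.N
      · simp only [hxt, h1, if_pos]
        exact hobs (l + 1) (by omega) (by omega) i hi
      · simp only [hxt, h1, if_neg, not_false_iff]
        exact hobs M.N (by omega) le_rfl i hi
  -- cost of the shifted candidate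
  have hgN : M.sc (xs M.N - xs M.N) (u M.N - u M.N) = 0 := by
    simpa using hsc0
  have hcostShift :
      M.Cost ut xt s = M.Cost u xs s - M.sc (x - xs M.N) (u 0 - u M.N) := by
    unfold MPC.Cost
    rw [hutN, hxtN]
    have hsum : ∑ l ∈ Finset.range M.N, M.sc (xt l - xs M.N) (ut l - u M.N)
        = ∑ l ∈ Finset.range M.N, M.sc (xs (l + 1) - xs M.N) (u (l + 1) - u M.N) := by
      apply Finset.sum_congr rfl
      intro l hl
      have hlN : l < M.N := Finset.mem_range.mp hl
      simp [hxt, hut, hlN]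
    rw [hsum]
    have key : ∑ l ∈ Finset.range (M.N + 1), M.sc (xs l - xs M.N) (u l - u M.N)
        = (∑ l ∈ Finset.range M.N, M.sc (xs (l + 1) - xs M.N) (u (l + 1) - u M.N))
          + M.sc (xs 0 - xs M.N) (u 0 - u M.N) := Finset.sum_range_succ' _ _
    rw [Finset.sum_range_succ, hgN, add_zero] at key
    rw [hx0] at key
    linarith
  have hle : M.Cost u' xs' s' ≤ M.Cost ut xt s := hopt'.2 ut xt s hfeasShift
  have hαnonneg : (0 : ℝ) ≤ αℓ ‖x - xs M.N‖ := by
    rcases eq_or_lt_of_le (norm_nonneg (x - xs M.N)) with h | h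
    · rw [← h, hαℓ.1.2.2]
    · have := hαℓ.1.2.1 Set.self_mem_Ici (Set.mem_Ici.mpr h.le) h
      linarith [hαℓ.1.2.2]
  refine ⟨by linarith, ?_, by linarith⟩
  have := hsclb (x - xs M.N) (u 0 - u M.N)
  linarith
end
end

section
/- (Cost bound for the shifted artificial reference, eq. (13).) Suppose g_p is Lipschitz with constant L_{g_p}, V_o is convex with V_o(0) = 0, and the controllability assumption holds with constants b > 0 and σ > 1. Let s ∈ [0,1], β ∈ [0,1], and set ŝ = (1−β)s + β. If x is a state with ‖x − g_p(ŝ)‖ ≤ ε, and (u, x̃, ŝ) is a tuple feasible at x provided by the controllability assumption (so Σ_{l=0}^{N−1} ℓ(x̃_l − g_p(ŝ), u_l − u_{ŝ}) ≤ b‖x − g_p(ŝ)‖^σ), then J_N(u, x̃, ŝ) ≤ 2^{σ−1} b ‖x − g_p(s)‖^σ + 2^{σ−1} b L_{g_p}^σ β^σ |s − 1|^σ + (1−β) V_o(1−s). -/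
open Filter Topology

noncomputable section

private lemma pow_mean_two {a c p : ℝ} (ha : 0 ≤ a) (hc : 0 ≤ c) (hp : 1 ≤ p) :
    (a + c) ^ p ≤ 2 ^ (p - 1) * (a ^ p + c ^ p) := by
  have h := NNReal.rpow_add_le_mul_rpow_add_rpow a.toNNReal c.toNNReal hp
  have := NNReal.coe_le_coe.2 h
  push_cast at this
  rwa [Real.coe_toNNReal _ ha, Real.coe_toNNReal _ hc] at this

/-- **Cost bound for the shifted artificial reference (eq. (13)).** Suppose `g_p` is
`L_{g_p}`-Lipschitz, `V_o` is convex with `V_o 0 = 0`, the steady-state path assumptions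
hold, and `b > 0`, `σ > 1`. Let `s, β ∈ [0,1]`, `ŝ = (1−β) s + β`, and let `x` satisfy
`‖x − gp ŝ‖ ≤ ε`. If `(u, x̃, ŝ)` is a tuple feasible at `x` provided by the
controllability assumption, i.e. `Σ_{l<N} ℓ(x̃_l − gp ŝ, u_l − u_ŝ) ≤ b ‖x − gp ŝ‖ ^ σ`,
then `J_N(u, x̃, ŝ) ≤ 2^{σ−1} b ‖x − gp s‖^σ + 2^{σ−1} b L_{g_p}^σ β^σ |s−1|^σ
+ (1−β) V_o (1−s)`. -/
theorem mpc_shifted_reference_cost_bound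
    {n m q : ℕ} (M : MPC n m q)
    (hpath : M.SteadyStatePath)
    (Lgp : ℝ) (hLgp : 0 < Lgp)
    (hgpLip : ∀ s ∈ Set.Icc (0 : ℝ) 1, ∀ t ∈ Set.Icc (0 : ℝ) 1,
      ‖M.gp s - M.gp t‖ ≤ Lgp * |s - t|)
    (hVoConv : ConvexOn ℝ (Set.Icc 0 1) M.Vo)
    (hVo0 : M.Vo 0 = 0)
    (hVoNonneg : ∀ t ∈ Set.Icc (0 : ℝ) 1, 0 ≤ M.Vo t)
    (b ε σ : ℝ) (hb : 0 < b) (hε : 0 < ε) (hσ : 1 < σ)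
    (s β : ℝ) (hs : s ∈ Set.Icc (0 : ℝ) 1) (hβ : β ∈ Set.Icc (0 : ℝ) 1)
    (x : EuclideanSpace ℝ (Fin n)) (hx : ‖x - M.gp ((1 - β) * s + β)‖ ≤ ε)
    (u : ℕ → EuclideanSpace ℝ (Fin m)) (xt : ℕ → EuclideanSpace ℝ (Fin n))
    (hfeas : M.Feasible x u xt ((1 - β) * s + β))
    (hsum : (∑ l ∈ Finset.range M.N,
        M.sc (xt l - M.gp ((1 - β) * s + β)) (u l - M.us ((1 - β) * s + β)))
      ≤ b * ‖x - M.gp ((1 - β) * s + β)‖ ^ σ) :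
    M.Cost u xt ((1 - β) * s + β) ≤
      2 ^ (σ - 1) * b * ‖x - M.gp s‖ ^ σ +
      2 ^ (σ - 1) * b * Lgp ^ σ * β ^ σ * |s - 1| ^ σ +
      (1 - β) * M.Vo (1 - s) := by
  set sh := (1 - β) * s + β with hsh
  obtain ⟨hs0, hs1⟩ := hs
  obtain ⟨hβ0, hβ1⟩ := hβ
  have hshmem : sh ∈ Set.Icc (0 : ℝ) 1 := by
    constructor <;> nlinarith
  -- terminal state equals steady state
  obtain ⟨_, _, _, hterm, hout, _, _⟩ := hfeas
  obtain ⟨hxN, huN⟩ := hpath.2.2.2.2 sh hshmem (xt M.N) (u M.N) hterm.symm hout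
  have hσ1 : (1 : ℝ) ≤ σ := le_of_lt hσ
  -- norm bound
  have hgp : ‖M.gp s - M.gp sh‖ ≤ Lgp * (β * |s - 1|) := by
    have := hgpLip s ⟨hs0, hs1⟩ sh hshmem
    have habs : |s - sh| = β * |s - 1| := by
      have : s - sh = β * (s - 1) := by ring
      rw [this, abs_mul, abs_of_nonneg hβ0]
    rw [habs] at this; exact this
  have hne : ‖x - M.gp sh‖ ≤ ‖x - M.gp s‖ + Lgp * (β * |s - 1|) := by
    calc ‖x - M.gp sh‖ = ‖(x - M.gp s) + (M.gp s - M.gp sh)‖ := by rw [sub_add_sub_cancel]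
      _ ≤ ‖x - M.gp s‖ + ‖M.gp s - M.gp sh‖ := norm_add_le _ _
      _ ≤ _ := by linarith
  have hc0 : (0 : ℝ) ≤ Lgp * (β * |s - 1|) :=
    mul_nonneg hLgp.le (mul_nonneg hβ0 (abs_nonneg _))
  have hpow : ‖x - M.gp sh‖ ^ σ ≤
      2 ^ (σ - 1) * (‖x - M.gp s‖ ^ σ + (Lgp * (β * |s - 1|)) ^ σ) := by
    calc ‖x - M.gp sh‖ ^ σ ≤ (‖x - M.gp s‖ + Lgp * (β * |s - 1|)) ^ σ :=
          Real.rpow_le_rpow (norm_nonneg _) hne (by linarith)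
      _ ≤ _ := pow_mean_two (norm_nonneg _) hc0 hσ1
  have hmul : (Lgp * (β * |s - 1|)) ^ σ = Lgp ^ σ * β ^ σ * |s - 1| ^ σ := by
    rw [Real.mul_rpow hLgp.le (mul_nonneg hβ0 (abs_nonneg _)),
        Real.mul_rpow hβ0 (abs_nonneg _), mul_assoc]
  -- convexity bound on Vo
  have hVo : M.Vo (1 - sh) ≤ (1 - β) * M.Vo (1 - s) := by
    have h1s : (1 : ℝ) - s ∈ Set.Icc (0 : ℝ) 1 := ⟨by linarith, by linarith⟩
    have h0 : (0 : ℝ) ∈ Set.Icc (0 : ℝ) 1 := ⟨le_refl _, zero_le_one⟩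
    have := hVoConv.2 h1s h0 (by linarith : (0:ℝ) ≤ 1 - β) hβ0 (by ring)
    simp only [smul_eq_mul, mul_zero, add_zero] at this
    have heq : (1 - β) * (1 - s) = 1 - sh := by ring
    rw [heq, hVo0, mul_zero, add_zero] at this
    exact this
  -- assemble
  have hsum' : (∑ l ∈ Finset.range M.N, M.sc (xt l - xt M.N) (u l - u M.N))
      ≤ b * ‖x - M.gp sh‖ ^ σ := by rw [hxN, huN]; exact hsum
  have hb' : b * ‖x - M.gp sh‖ ^ σ ≤
      2 ^ (σ - 1) * b * ‖x - M.gp s‖ ^ σ +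
      2 ^ (σ - 1) * b * Lgp ^ σ * β ^ σ * |s - 1| ^ σ := by
    have := mul_le_mul_of_nonneg_left hpow hb.le
    calc b * ‖x - M.gp sh‖ ^ σ
        ≤ b * (2 ^ (σ - 1) * (‖x - M.gp s‖ ^ σ + (Lgp * (β * |s - 1|)) ^ σ)) := this
      _ = _ := by rw [hmul]; ring
  unfold MPC.Cost
  linarith
end
end
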